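/- For the iterated Latin hypercube sampling sequence with k ≥ 2 coordinates, let h : [0,1] → ℝ be a monotone (nondecreasing or nonincreasing) function with ∫_0^1 h(x)² dx < ∞. Then for every T ≥ 0, Cov(h(U_{T+1}^{(1)}), h(U_{T+1}^{(2)})) ≤ Cov(h(U_T^{(1)}), h(U_T^{(2)})); equivalently (since each U_t^{(j)} is Uniform(0,1), so the variances do not depend on T), if h is nonconstant on a set of positive Lebesgue measure, the correlation Corr(h(U_T^{(1)}), h(U_T^{(2)})) is nonincreasing as a function of T. -/

import Mathlib

open MeasureTheory ProbabilityTheory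

instance {k : ℕ} : MeasurableSpace (Equiv.Perm (Fin k)) := ⊤

/-- The iterated Latin hypercube sampling (ILHS) recursion:
`U₀` has i.i.d. Uniform(0,1) coordinates and
`U_{t+1}⁽ʲ⁾ = (σ_t(j) + U_t⁽ʲ⁾)/k`. -/
noncomputable def ilhs {Ω : Type*} {k : ℕ} (U0 : Fin k → Ω → ℝ)
    (σ : ℕ → Ω → Equiv.Perm (Fin k)) : ℕ → Fin k → Ω → ℝ
  | 0 => U0
  | t + 1 => fun j ω => (((σ t ω j : ℕ) : ℝ) + ilhs U0 σ t j ω) / k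

/-- Value types for the joint family consisting of the initial uniforms and the random
permutations. -/
def ilhsβ (k : ℕ) : Fin k ⊕ ℕ → Type
  | Sum.inl _ => ℝ
  | Sum.inr _ => Equiv.Perm (Fin k)

instance ilhsβMeasurableSpace (k : ℕ) : ∀ x, MeasurableSpace (ilhsβ k x)
  | Sum.inl _ => (inferInstance : MeasurableSpace ℝ)
  | Sum.inr _ => (inferInstance : MeasurableSpace (Equiv.Perm (Fin k)))

/-- The joint family consisting of the initial uniforms and the random permutations. -/
def ilhsFam {Ω : Type*} {k : ℕ} (U0 : Fin k → Ω → ℝ)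
    (σ : ℕ → Ω → Equiv.Perm (Fin k)) : ∀ x : Fin k ⊕ ℕ, Ω → ilhsβ k x
  | Sum.inl j => U0 j
  | Sum.inr t => σ t

/-- The defining hypotheses of the ILHS sequence: the initial coordinates are
Uniform(0,1), each `σ_t` is a uniformly distributed random permutation of
`{0, …, k−1}`, and all of these are mutually independent. -/
def IsILHS {Ω : Type*} [MeasurableSpace Ω] (μ : Measure Ω) {k : ℕ}
    (U0 : Fin k → Ω → ℝ) (σ : ℕ → Ω → Equiv.Perm (Fin k)) : Prop :=
  (∀ j, Measurable (U0 j)) ∧ (∀ t, Measurable (σ t)) ∧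
  (∀ j, μ.map (U0 j) = volume.restrict (Set.Ioo (0 : ℝ) 1)) ∧
  (∀ t (π : Equiv.Perm (Fin k)), μ {ω | σ t ω = π} = ((Nat.factorial k : ENNReal))⁻¹) ∧
  iIndepFun (ilhsFam U0 σ) μ

/-- Covariance of two real-valued functions with respect to a measure. -/
noncomputable def covar {Ω : Type*} [MeasurableSpace Ω] (μ : Measure Ω) (f g : Ω → ℝ) : ℝ :=
  (∫ ω, f ω * g ω ∂μ) - (∫ ω, f ω ∂μ) * ∫ ω, g ω ∂μ


set_option linter.unusedSectionVars false

section Meas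

variable {Ω : Type*} [MeasurableSpace Ω] {k : ℕ} {U0 : Fin k → Ω → ℝ}
  {σ : ℕ → Ω → Equiv.Perm (Fin k)}

lemma ilhs_measurable (hU : ∀ j, Measurable (U0 j)) (hσ : ∀ t, Measurable (σ t))
    (t : ℕ) (j : Fin k) : Measurable (ilhs U0 σ t j) := by
  induction t with
  | zero => exact hU j
  | succ t ih =>
    show Measurable fun ω => (((σ t ω j : ℕ) : ℝ) + ilhs U0 σ t j ω) / (k : ℝ)
    have h1 : Measurable fun ω => ((σ t ω j : ℕ) : ℝ) :=
      (measurable_from_top (f := fun π : Equiv.Perm (Fin k) => ((π j : ℕ) : ℝ))).comp (hσ t)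
    exact (h1.add ih).div_const _

lemma ilhs_mem_Ioo (hk : 0 < k) (t : ℕ) (j : Fin k) (ω : Ω)
    (h : U0 j ω ∈ Set.Ioo (0:ℝ) 1) : ilhs U0 σ t j ω ∈ Set.Ioo (0:ℝ) 1 := by
  induction t with
  | zero => exact h
  | succ t ih =>
    obtain ⟨h1, h2⟩ := ih
    have hkpos : (0:ℝ) < k := Nat.cast_pos.2 hk
    have ha : ((σ t ω j : ℕ) : ℝ) ≤ (k : ℝ) - 1 := by
      have := (σ t ω j).isLt
      have : ((σ t ω j : ℕ) : ℝ) ≤ ((k - 1 : ℕ) : ℝ) := by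
        exact_mod_cast Nat.le_sub_one_of_lt this
      calc ((σ t ω j : ℕ) : ℝ) ≤ ((k - 1 : ℕ) : ℝ) := this
        _ ≤ (k : ℝ) - 1 := by
          have : ((k - 1 : ℕ) : ℝ) = (k : ℝ) - 1 := by
            have : 1 ≤ k := hk
            push_cast [this]; ring
          exact this.le
    have hnn : (0:ℝ) ≤ ((σ t ω j : ℕ) : ℝ) := Nat.cast_nonneg _
    constructor
    · show 0 < (((σ t ω j : ℕ) : ℝ) + ilhs U0 σ t j ω) / (k:ℝ)
      positivity
    · show (((σ t ω j : ℕ) : ℝ) + ilhs U0 σ t j ω) / (k:ℝ) < 1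
      rw [div_lt_one hkpos]; linarith

end Meas

set_option linter.unusedSectionVars false

section Indep

variable {Ω : Type*} [MeasurableSpace Ω] {μ : Measure Ω} {k : ℕ} {U0 : Fin k → Ω → ℝ}
  {σ : ℕ → Ω → Equiv.Perm (Fin k)}

lemma ilhsFam_measurable (hU : ∀ j, Measurable (U0 j)) (hσ : ∀ t, Measurable (σ t)) :
    ∀ i, Measurable (ilhsFam U0 σ i) := by
  rintro (j | t)
  · exact hU j
  · exact hσ t

def reconU (k : ℕ) (S : Finset (Fin k ⊕ ℕ)) (j : Fin k)
    (p : ∀ i : (S : Finset (Fin k ⊕ ℕ)), ilhsβ k i) : ℝ :=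
  if hj : Sum.inl j ∈ S then (p ⟨Sum.inl j, hj⟩ : ℝ) else (0 : ℝ)

def reconσ (k : ℕ) (S : Finset (Fin k ⊕ ℕ)) (t : ℕ)
    (p : ∀ i : (S : Finset (Fin k ⊕ ℕ)), ilhsβ k i) : Equiv.Perm (Fin k) :=
  if ht : Sum.inr t ∈ S then (p ⟨Sum.inr t, ht⟩ : Equiv.Perm (Fin k)) else 1

lemma reconU_measurable (k : ℕ) (S : Finset (Fin k ⊕ ℕ)) (j : Fin k) :
    Measurable (reconU k S j) := by
  unfold reconU
  by_cases hj : Sum.inl j ∈ S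
  · simp only [hj, ↓reduceDIte]
    exact measurable_pi_apply _
  · simp only [hj, ↓reduceDIte]
    exact measurable_const

lemma reconσ_measurable (k : ℕ) (S : Finset (Fin k ⊕ ℕ)) (t : ℕ) :
    Measurable (reconσ k S t) := by
  unfold reconσ
  by_cases ht : Sum.inr t ∈ S
  · simp only [ht, ↓reduceDIte]
    exact measurable_pi_apply _
  · simp only [ht, ↓reduceDIte]
    exact measurable_const

lemma reconU_spec (S : Finset (Fin k ⊕ ℕ)) {j : Fin k} (hj : Sum.inl j ∈ S) (ω : Ω) :
    reconU k S j (fun i => ilhsFam U0 σ i ω) = U0 j ω := by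
  unfold reconU; exact dif_pos hj

lemma reconσ_spec (S : Finset (Fin k ⊕ ℕ)) {t : ℕ} (ht : Sum.inr t ∈ S) (ω : Ω) :
    reconσ k S t (fun i => ilhsFam U0 σ i ω) = σ t ω := by
  unfold reconσ; exact dif_pos ht

lemma recon_ilhs (S : Finset (Fin k ⊕ ℕ)) {j : Fin k} (hj : Sum.inl j ∈ S) {T : ℕ}
    (hT : ∀ t < T, Sum.inr t ∈ S) (t : ℕ) (htT : t ≤ T) (ω : Ω) :
    ilhs (reconU k S) (reconσ k S) t j (fun i => ilhsFam U0 σ i ω) = ilhs U0 σ t j ω := by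
  induction t with
  | zero => exact reconU_spec S hj ω
  | succ t ih =>
    show (((reconσ k S t _ j : ℕ) : ℝ) + ilhs (reconU k S) (reconσ k S) t j _) / (k:ℝ)
        = (((σ t ω j : ℕ) : ℝ) + ilhs U0 σ t j ω) / (k:ℝ)
    rw [ih (by omega), reconσ_spec S (hT t (by omega)) ω]

lemma ilhs_indep (h : IsILHS μ U0 σ) (T : ℕ) (j0 j1 : Fin k) :
    IndepFun (σ T) (fun ω => (ilhs U0 σ T j0 ω, ilhs U0 σ T j1 ω)) μ := by
  classical
  obtain ⟨hU, hσ, hlaw, hperm, hindep⟩ := h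
  set S : Finset (Fin k ⊕ ℕ) :=
    insert (Sum.inl j0) (insert (Sum.inl j1) ((Finset.range T).image Sum.inr)) with hS
  have hdisj : Disjoint ({Sum.inr T} : Finset (Fin k ⊕ ℕ)) S := by
    simp only [Finset.disjoint_left, Finset.mem_singleton]
    rintro x rfl
    simp [hS]
  have base := hindep.indepFun_finset {Sum.inr T} S hdisj (ilhsFam_measurable hU hσ)
  let ψ : (∀ i : (S : Finset (Fin k ⊕ ℕ)), ilhsβ k i) → ℝ × ℝ := fun p =>
    (ilhs (reconU k S) (reconσ k S) T j0 p, ilhs (reconU k S) (reconσ k S) T j1 p)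
  have hψ : Measurable ψ :=
    (ilhs_measurable (reconU_measurable k S) (reconσ_measurable k S) T j0).prodMk
      (ilhs_measurable (reconU_measurable k S) (reconσ_measurable k S) T j1)
  let φ : (∀ i : ({Sum.inr T} : Finset (Fin k ⊕ ℕ)), ilhsβ k i) → Equiv.Perm (Fin k) :=
    fun p => p ⟨Sum.inr T, Finset.mem_singleton_self _⟩
  have hφ : Measurable φ := measurable_pi_apply _
  have main := base.comp hφ hψ
  have hj0 : Sum.inl j0 ∈ S := by simp [hS]
  have hj1 : Sum.inl j1 ∈ S := by simp [hS]
  have hT : ∀ t < T, Sum.inr t ∈ S := fun t ht => by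
    simp [hS, Finset.mem_image, Finset.mem_range, ht]
  have e1 : (φ ∘ fun ω (i : ({Sum.inr T} : Finset (Fin k ⊕ ℕ))) => ilhsFam U0 σ i ω)
      = σ T := rfl
  have e2 : (ψ ∘ fun ω (i : (S : Finset (Fin k ⊕ ℕ))) => ilhsFam U0 σ i ω)
      = fun ω => (ilhs U0 σ T j0 ω, ilhs U0 σ T j1 ω) := by
    funext ω
    show (ilhs (reconU k S) (reconσ k S) T j0 _, ilhs (reconU k S) (reconσ k S) T j1 _) = _
    rw [recon_ilhs S hj0 hT T le_rfl ω, recon_ilhs S hj1 hT T le_rfl ω]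
  rw [e1, e2] at main
  exact main

end Indep


section Step

variable {Ω : Type*} [MeasurableSpace Ω] {μ : Measure Ω} [IsProbabilityMeasure μ] {k : ℕ}
  {U0 : Fin k → Ω → ℝ} {σ : ℕ → Ω → Equiv.Perm (Fin k)}

lemma integrable_bdd {W : Ω → ℝ} (hW : AEStronglyMeasurable W μ) {M : ℝ}
    (hb : ∀ ω, |W ω| ≤ M) : Integrable W μ :=
  Integrable.mono' (integrable_const M) hW (Filter.Eventually.of_forall fun ω => by
    simpa using hb ω)

lemma ilhs_base_single (h : IsILHS μ U0 σ) {f : ℝ → ℝ} (hf : Measurable f) (j : Fin k) :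
    ∫ ω, f (U0 j ω) ∂μ = ∫ x in Set.Ioo (0:ℝ) 1, f x := by
  rw [← integral_map (h.1 j).aemeasurable hf.aestronglyMeasurable, h.2.2.1 j]

lemma ilhs_base (h : IsILHS μ U0 σ) {f g : ℝ → ℝ} (hf : Measurable f) (hg : Measurable g)
    {j0 j1 : Fin k} (hne : j0 ≠ j1) :
    ∫ ω, f (U0 j0 ω) * g (U0 j1 ω) ∂μ
      = (∫ x in Set.Ioo (0:ℝ) 1, f x) * ∫ x in Set.Ioo (0:ℝ) 1, g x := by
  have hind0 : IndepFun (ilhsFam U0 σ (Sum.inl j0)) (ilhsFam U0 σ (Sum.inl j1)) μ :=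
    h.2.2.2.2.indepFun (by simpa using hne)
  have hind : IndepFun (U0 j0) (U0 j1) μ := hind0
  have hmul := (hind.comp hf hg).integral_fun_mul_eq_mul_integral
    ((hf.comp (h.1 j0)).aestronglyMeasurable) ((hg.comp (h.1 j1)).aestronglyMeasurable)
  simp only [Function.comp_def] at hmul
  rw [hmul, ilhs_base_single h hf j0, ilhs_base_single h hg j1]

lemma ilhs_step (h : IsILHS μ U0 σ) {f g : ℝ → ℝ} (hf : Measurable f) (hg : Measurable g)
    {Mf Mg : ℝ} (hbf : ∀ x, |f x| ≤ Mf) (hbg : ∀ x, |g x| ≤ Mg) (T : ℕ) (j0 j1 : Fin k) :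
    ∫ ω, f (ilhs U0 σ (T+1) j0 ω) * g (ilhs U0 σ (T+1) j1 ω) ∂μ
      = (Nat.factorial k : ℝ)⁻¹ * ∑ π : Equiv.Perm (Fin k),
          ∫ ω, f ((((π j0 : ℕ) : ℝ) + ilhs U0 σ T j0 ω) / k)
            * g ((((π j1 : ℕ) : ℝ) + ilhs U0 σ T j1 ω) / k) ∂μ := by
  classical
  obtain ⟨hU, hσ, hlaw, hperm, hindep⟩ := h
  have hind := ilhs_indep ⟨hU, hσ, hlaw, hperm, hindep⟩ T j0 j1
  have hMf : 0 ≤ Mf := le_trans (abs_nonneg _) (hbf 0)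
  have hMg : 0 ≤ Mg := le_trans (abs_nonneg _) (hbg 0)
  have hXm : Measurable (ilhs U0 σ T j0) := ilhs_measurable hU hσ T j0
  have hYm : Measurable (ilhs U0 σ T j1) := ilhs_measurable hU hσ T j1
  have hpt : (fun ω => f (ilhs U0 σ (T+1) j0 ω) * g (ilhs U0 σ (T+1) j1 ω))
      = fun ω => ∑ π : Equiv.Perm (Fin k), (if σ T ω = π then (1:ℝ) else 0) *
          (f ((((π j0 : ℕ) : ℝ) + ilhs U0 σ T j0 ω) / k)
            * g ((((π j1 : ℕ) : ℝ) + ilhs U0 σ T j1 ω) / k)) := by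
    funext ω
    rw [Finset.sum_eq_single (σ T ω)]
    · simp [ilhs]
    · intro π _ hπ
      rw [if_neg fun hh => hπ hh.symm, zero_mul]
    · intro habs
      exact absurd (Finset.mem_univ _) habs
  rw [hpt]
  have hterm_meas : ∀ π : Equiv.Perm (Fin k), Measurable fun ω =>
      (if σ T ω = π then (1:ℝ) else 0) *
        (f ((((π j0 : ℕ) : ℝ) + ilhs U0 σ T j0 ω) / k)
          * g ((((π j1 : ℕ) : ℝ) + ilhs U0 σ T j1 ω) / k)) := by
    intro π
    refine Measurable.mul ?_ (Measurable.mul ?_ ?_)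
    · exact (measurable_from_top (f := fun π' : Equiv.Perm (Fin k) =>
        if π' = π then (1:ℝ) else 0)).comp (hσ T)
    · exact hf.comp ((measurable_const.add hXm).div_const _)
    · exact hg.comp ((measurable_const.add hYm).div_const _)
  have hterm_int : ∀ π ∈ Finset.univ (α := Equiv.Perm (Fin k)), Integrable (fun ω =>
      (if σ T ω = π then (1:ℝ) else 0) *
        (f ((((π j0 : ℕ) : ℝ) + ilhs U0 σ T j0 ω) / k)
          * g ((((π j1 : ℕ) : ℝ) + ilhs U0 σ T j1 ω) / k))) μ := by
    intro π _
    refine integrable_bdd ((hterm_meas π).aestronglyMeasurable) (M := Mf * Mg) fun ω => ?_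
    rw [abs_mul, abs_mul]
    have h1 : |if σ T ω = π then (1:ℝ) else 0| ≤ 1 := by split <;> simp
    have h2 : |f ((((π j0 : ℕ) : ℝ) + ilhs U0 σ T j0 ω) / k)| ≤ Mf := hbf _
    have h3 : |g ((((π j1 : ℕ) : ℝ) + ilhs U0 σ T j1 ω) / k)| ≤ Mg := hbg _
    have h4 : (0:ℝ) ≤ |f ((((π j0 : ℕ) : ℝ) + ilhs U0 σ T j0 ω) / k)| := abs_nonneg _
    have h5 : (0:ℝ) ≤ |g ((((π j1 : ℕ) : ℝ) + ilhs U0 σ T j1 ω) / k)| := abs_nonneg _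
    calc |if σ T ω = π then (1:ℝ) else 0| *
          (|f ((((π j0 : ℕ) : ℝ) + ilhs U0 σ T j0 ω) / k)|
            * |g ((((π j1 : ℕ) : ℝ) + ilhs U0 σ T j1 ω) / k)|)
        ≤ 1 * (Mf * Mg) :=
          mul_le_mul h1 (mul_le_mul h2 h3 h5 hMf) (mul_nonneg h4 h5) zero_le_one
      _ = Mf * Mg := one_mul _
  rw [integral_finset_sum _ hterm_int, Finset.mul_sum]
  refine Finset.sum_congr rfl fun π _ => ?_
  -- independence splits the integral
  have hsetm : MeasurableSet {ω | σ T ω = π} := by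
    have : {ω | σ T ω = π} = σ T ⁻¹' {π} := rfl
    rw [this]
    exact (hσ T) MeasurableSpace.measurableSet_top
  have hφm : Measurable (fun π' : Equiv.Perm (Fin k) => if π' = π then (1:ℝ) else 0) :=
    measurable_from_top
  have hψm : Measurable (fun z : ℝ × ℝ =>
      f ((((π j0 : ℕ) : ℝ) + z.1) / k) * g ((((π j1 : ℕ) : ℝ) + z.2) / k)) := by
    refine Measurable.mul (hf.comp ?_) (hg.comp ?_)
    · exact (measurable_const.add measurable_fst).div_const _
    · exact (measurable_const.add measurable_snd).div_const _
  have hmul := (hind.comp hφm hψm).integral_fun_mul_eq_mul_integral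
    ((hφm.comp (hσ T)).aestronglyMeasurable)
    ((hψm.comp (hXm.prodMk hYm)).aestronglyMeasurable)
  simp only [Function.comp_def] at hmul
  rw [hmul]
  congr 1
  -- the indicator integral
  have hindic : (fun ω => if σ T ω = π then (1:ℝ) else 0)
      = Set.indicator {ω | σ T ω = π} (fun _ => (1:ℝ)) := by
    funext ω
    by_cases hω : σ T ω = π <;> simp [Set.indicator_apply, Set.mem_setOf_eq, hω]
  rw [hindic, integral_indicator_const _ hsetm, measureReal_def, hperm T π, smul_eq_mul, mul_one]
  simp [ENNReal.toReal_inv]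

end Step


section PermSum
open intervalIntegral

lemma sum_perm_fst {m : ℕ} (u : Fin (m+1) → ℝ) :
    ∑ π : Equiv.Perm (Fin (m+1)), u (π 0) = (Nat.factorial m : ℝ) * ∑ a, u a := by
  rw [← Equiv.sum_comp (Equiv.Perm.decomposeFin).symm (fun π => u (π 0))]
  rw [Fintype.sum_prod_type]
  simp [Finset.sum_const, Fintype.card_perm, mul_comm, Finset.mul_sum]

lemma sum_perm_pair {m : ℕ} (u v : Fin (m+2) → ℝ) :
    ∑ π : Equiv.Perm (Fin (m+2)), u (π 0) * v (π 1)
      = (Nat.factorial m : ℝ) * ((∑ a, u a) * (∑ a, v a) - ∑ a, u a * v a) := by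
  rw [← Equiv.sum_comp (Equiv.Perm.decomposeFin).symm (fun π => u (π 0) * v (π 1))]
  rw [Fintype.sum_prod_type]
  have inner : ∀ p : Fin (m+2),
      (∑ e : Equiv.Perm (Fin (m+1)), v (Equiv.Perm.decomposeFin.symm (p, e) 1))
        = (Nat.factorial m : ℝ) * ((∑ a, v a) - v p) := by
    intro p
    have h1 : ∀ e : Equiv.Perm (Fin (m+1)),
        v (Equiv.Perm.decomposeFin.symm (p, e) 1) = (fun b => v (Equiv.swap 0 p b.succ)) (e 0) := by
      intro e; rw [Equiv.Perm.decomposeFin_symm_apply_one]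
    rw [Finset.sum_congr rfl (fun e _ => h1 e), sum_perm_fst (fun b => v (Equiv.swap 0 p b.succ))]
    congr 1
    have h2 : ∑ i : Fin (m+2), v (Equiv.swap 0 p i)
        = v (Equiv.swap 0 p 0) + ∑ b : Fin (m+1), v (Equiv.swap 0 p b.succ) :=
      Fin.sum_univ_succ (fun i => v (Equiv.swap 0 p i))
    have h3 : ∑ i : Fin (m+2), v (Equiv.swap 0 p i) = ∑ a, v a :=
      Equiv.sum_comp (Equiv.swap 0 p) v
    rw [Equiv.swap_apply_left] at h2
    linarith
  calc ∑ p : Fin (m+2), ∑ e : Equiv.Perm (Fin (m+1)),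
        u (Equiv.Perm.decomposeFin.symm (p, e) 0) * v (Equiv.Perm.decomposeFin.symm (p, e) 1)
      = ∑ p : Fin (m+2), u p * ((Nat.factorial m : ℝ) * ((∑ a, v a) - v p)) := by
        refine Finset.sum_congr rfl fun p _ => ?_
        rw [← inner p, Finset.mul_sum]
        exact Finset.sum_congr rfl fun e _ => by rw [Equiv.Perm.decomposeFin_symm_apply_zero]
    _ = (Nat.factorial m : ℝ) * ((∑ a, u a) * (∑ a, v a) - ∑ a, u a * v a) := by
        have key : ∀ p : Fin (m+2), u p * ((Nat.factorial m : ℝ) * ((∑ a, v a) - v p))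
            = (Nat.factorial m : ℝ) * ((∑ a, v a) * u p) - (Nat.factorial m : ℝ) * (u p * v p) :=
          fun p => by ring
        rw [Finset.sum_congr rfl fun p _ => key p, Finset.sum_sub_distrib, ← Finset.mul_sum,
          ← Finset.mul_sum, ← Finset.mul_sum]
        ring

lemma sum_perm_snd {m : ℕ} (v : Fin (m+2) → ℝ) :
    ∑ π : Equiv.Perm (Fin (m+2)), v (π 1) = (Nat.factorial (m+1) : ℝ) * ∑ a, v a := by
  have := sum_perm_pair (fun _ => (1:ℝ)) v
  simp only [one_mul] at this
  rw [this]
  simp [Finset.sum_const, Nat.factorial_succ]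
  ring


noncomputable def sliceInt (k : ℕ) (f : ℝ → ℝ) (a : ℕ) : ℝ :=
  ∫ x in ((a : ℝ)/k)..(((a : ℝ)+1)/k), f x

lemma Monotone.intervalIntegrable' {f : ℝ → ℝ} (hf : Monotone f) (a b : ℝ) :
    IntervalIntegrable f volume a b :=
  (hf.monotoneOn _).intervalIntegrable

lemma comp_sliceInt {k : ℕ} (hk : 0 < k) (f : ℝ → ℝ) (a : ℕ) :
    (∫ x in (0:ℝ)..1, f (((a:ℝ) + x)/k)) = k * sliceInt k f a := by
  have hkne : (k : ℝ) ≠ 0 := Nat.cast_ne_zero.2 hk.ne'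
  simp only [add_div]
  rw [intervalIntegral.integral_comp_add_div f hkne ((a:ℝ)/k)]
  rw [smul_eq_mul, sliceInt, add_div]
  norm_num

lemma sum_sliceInt {k : ℕ} (hk : 0 < k) (f : ℝ → ℝ) (hf : Monotone f) :
    ∑ a : Fin k, sliceInt k f a = ∫ x in (0:ℝ)..1, f x := by
  have hkne : (k : ℝ) ≠ 0 := Nat.cast_ne_zero.2 hk.ne'
  rw [Fin.sum_univ_eq_sum_range (fun i => sliceInt k f i) k]
  have := intervalIntegral.sum_integral_adjacent_intervals
    (a := fun i : ℕ => (i : ℝ)/k) (f := f) (μ := volume) (n := k)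
    (fun i _ => hf.intervalIntegrable' _ _)
  simp only [Nat.cast_zero, zero_div, div_self hkne] at this
  rw [← this]
  refine Finset.sum_congr rfl fun i _ => ?_
  rw [sliceInt]
  norm_num [Nat.cast_succ]

lemma sliceInt_le {k : ℕ} (hk : 0 < k) {f : ℝ → ℝ} (hf : Monotone f) (a : ℕ) :
    sliceInt k f a ≤ 1/(k:ℝ) * f (((a:ℝ)+1)/k) := by
  have hkpos : (0:ℝ) < k := Nat.cast_pos.2 hk
  have hle : (a:ℝ)/k ≤ ((a:ℝ)+1)/k := by gcongr; linarith
  have h := intervalIntegral.integral_mono_on (μ := volume) hle (hf.intervalIntegrable' _ _)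
    intervalIntegrable_const (g := fun _ => f (((a:ℝ)+1)/k)) (fun x hx => hf hx.2)
  rw [intervalIntegral.integral_const, smul_eq_mul] at h
  calc sliceInt k f a ≤ (((a:ℝ)+1)/k - (a:ℝ)/k) * f (((a:ℝ)+1)/k) := h
    _ = 1/(k:ℝ) * f (((a:ℝ)+1)/k) := by congr 1; field_simp; ring

lemma sliceInt_ge {k : ℕ} (hk : 0 < k) {f : ℝ → ℝ} (hf : Monotone f) (a : ℕ) :
    1/(k:ℝ) * f ((a:ℝ)/k) ≤ sliceInt k f a := by
  have hkpos : (0:ℝ) < k := Nat.cast_pos.2 hk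
  have hle : (a:ℝ)/k ≤ ((a:ℝ)+1)/k := by gcongr; linarith
  have h := intervalIntegral.integral_mono_on (μ := volume) hle intervalIntegrable_const
    (hf.intervalIntegrable' _ _) (f := fun _ => f ((a:ℝ)/k)) (fun x hx => hf hx.1)
  rw [intervalIntegral.integral_const, smul_eq_mul] at h
  calc 1/(k:ℝ) * f ((a:ℝ)/k) = (((a:ℝ)+1)/k - (a:ℝ)/k) * f ((a:ℝ)/k) := by congr 1; field_simp; ring
    _ ≤ sliceInt k f a := h

lemma sliceInt_mono {k : ℕ} (hk : 0 < k) (f : ℝ → ℝ) (hf : Monotone f) :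
    Monotone fun a : ℕ => sliceInt k f a := by
  refine monotone_nat_of_le_succ fun a => ?_
  calc sliceInt k f a ≤ 1/(k:ℝ) * f (((a:ℝ)+1)/k) := sliceInt_le hk hf a
    _ = 1/(k:ℝ) * f ((((a+1:ℕ)):ℝ)/k) := by push_cast; ring_nf
    _ ≤ sliceInt k f (a+1) := sliceInt_ge hk hf (a+1)

lemma cheb_ineq0 {k : ℕ} (F G : Fin k → ℝ) (hF : Monovary F G) :
    (∑ a, F a) * (∑ a, G a) ≤ k * ∑ a, F a * G a := by
  have := hF.sum_mul_sum_le_card_mul_sum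
  simpa using this

end PermSum

section Main

variable {Ω : Type*} [MeasurableSpace Ω] {μ : Measure Ω} [IsProbabilityMeasure μ] {m : ℕ}
  {U0 : Fin (m+2) → Ω → ℝ} {σ : ℕ → Ω → Equiv.Perm (Fin (m+2))}

lemma EI_eq (f : ℝ → ℝ) : ∫ x in Set.Ioo (0:ℝ) 1, f x = ∫ x in (0:ℝ)..1, f x := by
  rw [intervalIntegral.integral_of_le zero_le_one, integral_Ioc_eq_integral_Ioo]

lemma mono_aff {f : ℝ → ℝ} (hf : Monotone f) (c : ℝ) {K : ℝ} (hK : 0 < K) :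
    Monotone fun x => f ((c + x)/K) :=
  fun x y hxy => hf (by gcongr)

lemma EI_aff {K : ℕ} (hK : 0 < K) (f : ℝ → ℝ) (a : ℕ) :
    ∫ x in Set.Ioo (0:ℝ) 1, f (((a:ℝ) + x)/(K:ℝ)) = (K:ℝ) * sliceInt K f a := by
  rw [EI_eq, comp_sliceInt hK]

lemma ilhs_mean (h : IsILHS μ U0 σ) :
    ∀ (T : ℕ) (f : ℝ → ℝ), Monotone f → ∀ (M : ℝ), (∀ x, |f x| ≤ M) →
      (∫ ω, f (ilhs U0 σ T 0 ω) ∂μ = ∫ x in Set.Ioo (0:ℝ) 1, f x) ∧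
      (∫ ω, f (ilhs U0 σ T 1 ω) ∂μ = ∫ x in Set.Ioo (0:ℝ) 1, f x) := by
  intro T
  induction T with
  | zero =>
    intro f hf M hb
    exact ⟨ilhs_base_single h hf.measurable 0, ilhs_base_single h hf.measurable 1⟩
  | succ T ih =>
    intro f hf M hb
    have hone : ∀ x : ℝ, |(1:ℝ)| ≤ (1:ℝ) := fun _ => by norm_num
    have hK : (0:ℕ) < m + 2 := by omega
    have hKR : (0:ℝ) < ((m+2:ℕ):ℝ) := by positivity
    constructor
    · have hstep := ilhs_step h hf.measurable measurable_const hb hone T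
        (0 : Fin (m+2)) (1 : Fin (m+2))
      simp only [mul_one] at hstep
      rw [hstep]
      have hterm : ∀ π : Equiv.Perm (Fin (m+2)),
          ∫ ω, f ((((π 0 : ℕ) : ℝ) + ilhs U0 σ T 0 ω) / ((m+2:ℕ):ℝ)) ∂μ
            = ((m+2:ℕ):ℝ) * sliceInt (m+2) f (π 0 : ℕ) := by
        intro π
        have := (ih (fun x => f ((((π 0 : ℕ) : ℝ) + x) / ((m+2:ℕ):ℝ)))
          (mono_aff hf _ hKR) M (fun x => hb _)).1
        rw [this, EI_aff hK]
      rw [Finset.sum_congr rfl fun π _ => hterm π]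
      rw [sum_perm_fst (fun a : Fin (m+2) => ((m+2:ℕ):ℝ) * sliceInt (m+2) f (a : ℕ))]
      rw [← Finset.mul_sum, sum_sliceInt hK f hf, ← EI_eq]
      rw [show ((m+2).factorial : ℝ) = ((m+2:ℕ):ℝ) * ((m+1).factorial : ℝ) by
        push_cast [Nat.factorial_succ (m+1)]; ring]
      field_simp
    · have hstep := ilhs_step h measurable_const hf.measurable hone hb T
        (0 : Fin (m+2)) (1 : Fin (m+2))
      simp only [one_mul] at hstep
      rw [hstep]
      have hterm : ∀ π : Equiv.Perm (Fin (m+2)),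
          ∫ ω, f ((((π 1 : ℕ) : ℝ) + ilhs U0 σ T 1 ω) / ((m+2:ℕ):ℝ)) ∂μ
            = ((m+2:ℕ):ℝ) * sliceInt (m+2) f (π 1 : ℕ) := by
        intro π
        have := (ih (fun x => f ((((π 1 : ℕ) : ℝ) + x) / ((m+2:ℕ):ℝ)))
          (mono_aff hf _ hKR) M (fun x => hb _)).2
        rw [this, EI_aff hK]
      rw [Finset.sum_congr rfl fun π _ => hterm π]
      rw [sum_perm_snd (fun a : Fin (m+2) => ((m+2:ℕ):ℝ) * sliceInt (m+2) f (a : ℕ))]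
      rw [← Finset.mul_sum, sum_sliceInt hK f hf, ← EI_eq]
      rw [show ((m+2).factorial : ℝ) = ((m+2:ℕ):ℝ) * ((m+1).factorial : ℝ) by
        push_cast [Nat.factorial_succ (m+1)]; ring]
      field_simp

lemma ilhs_claim (h : IsILHS μ U0 σ) :
    ∀ (T : ℕ) (f g : ℝ → ℝ), Monotone f → Monotone g → ∀ (Mf Mg : ℝ),
      (∀ x, |f x| ≤ Mf) → (∀ x, |g x| ≤ Mg) →
      ∫ ω, f (ilhs U0 σ (T+1) 0 ω) * g (ilhs U0 σ (T+1) 1 ω) ∂μ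
        ≤ ∫ ω, f (ilhs U0 σ T 0 ω) * g (ilhs U0 σ T 1 ω) ∂μ := by
  intro T
  induction T with
  | zero =>
    intro f g hf hg Mf Mg hbf hbg
    have hK : (0:ℕ) < m+2 := by omega
    have hKR : (0:ℝ) < ((m+2:ℕ):ℝ) := by positivity
    have hne : (0 : Fin (m+2)) ≠ 1 := by simp [Fin.ext_iff]
    rw [ilhs_step h hf.measurable hg.measurable hbf hbg 0 0 1]
    have hbase : ∫ ω, f (ilhs U0 σ 0 0 ω) * g (ilhs U0 σ 0 1 ω) ∂μ
        = (∫ x in Set.Ioo (0:ℝ) 1, f x) * ∫ x in Set.Ioo (0:ℝ) 1, g x :=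
      ilhs_base h hf.measurable hg.measurable hne
    rw [hbase]
    have hterm : ∀ π : Equiv.Perm (Fin (m+2)),
        ∫ ω, f ((((π 0 : ℕ):ℝ) + ilhs U0 σ 0 0 ω)/((m+2:ℕ):ℝ))
            * g ((((π 1 : ℕ):ℝ) + ilhs U0 σ 0 1 ω)/((m+2:ℕ):ℝ)) ∂μ
          = (((m+2:ℕ):ℝ) * sliceInt (m+2) f (π 0 : ℕ))
            * (((m+2:ℕ):ℝ) * sliceInt (m+2) g (π 1 : ℕ)) := by
      intro π
      have hb2 := ilhs_base h (f := fun x => f ((((π 0 : ℕ):ℝ) + x)/((m+2:ℕ):ℝ)))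
        (g := fun x => g ((((π 1 : ℕ):ℝ) + x)/((m+2:ℕ):ℝ)))
        (mono_aff hf _ hKR).measurable (mono_aff hg _ hKR).measurable hne
      rw [EI_aff hK, EI_aff hK] at hb2
      exact hb2
    rw [Finset.sum_congr rfl fun π _ => hterm π]
    rw [sum_perm_pair (fun a : Fin (m+2) => ((m+2:ℕ):ℝ) * sliceInt (m+2) f (a : ℕ))
      (fun a : Fin (m+2) => ((m+2:ℕ):ℝ) * sliceInt (m+2) g (a : ℕ))]
    rw [EI_eq f, EI_eq g, ← sum_sliceInt hK f hf, ← sum_sliceInt hK g hg]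
    -- notation
    set K : ℝ := ((m+2:ℕ):ℝ) with hKdef
    set F : Fin (m+2) → ℝ := fun a => sliceInt (m+2) f (a : ℕ) with hF
    set G : Fin (m+2) → ℝ := fun a => sliceInt (m+2) g (a : ℕ) with hG
    have e1 : ∑ a : Fin (m+2), K * F a = K * ∑ a, F a := by rw [Finset.mul_sum]
    have e2 : ∑ a : Fin (m+2), K * G a = K * ∑ a, G a := by rw [Finset.mul_sum]
    have e3 : ∑ a : Fin (m+2), (K * F a) * (K * G a) = K * K * ∑ a, F a * G a := by
      rw [Finset.mul_sum]
      exact Finset.sum_congr rfl fun a _ => by ring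
    rw [e1, e2, e3]
    -- Chebyshev
    have hmv : Monovary F G := by
      intro i j hlt
      have hij : (i : ℕ) ≤ (j : ℕ) := by
        by_contra hcon
        push_neg at hcon
        exact absurd hlt (not_lt.2 (sliceInt_mono hK g hg (le_of_lt hcon)))
      exact sliceInt_mono hK f hf hij
    have hcheb : (∑ a, F a) * (∑ a, G a) ≤ K * ∑ a, F a * G a := by
      have h0 := hmv.sum_mul_sum_le_card_mul_sum
      have hc : ((Fintype.card (Fin (m+2)) : ℕ) : ℝ) = K := by
        rw [Fintype.card_fin, hKdef]
      rw [hc] at h0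
      exact h0
    have hfact : ((m+2).factorial : ℝ) = K * (K - 1) * ((m).factorial : ℝ) := by
      rw [hKdef]
      push_cast [Nat.factorial_succ]
      ring
    have hfacpos : (0:ℝ) < ((m).factorial : ℝ) := by positivity
    have hK2 : (2:ℝ) ≤ K := by
      rw [hKdef]; exact_mod_cast (by omega : 2 ≤ m+2)
    rw [hfact, inv_mul_le_iff₀ (mul_pos (mul_pos (by linarith : (0:ℝ) < K) (by linarith : (0:ℝ) < K - 1)) hfacpos)]
    have hint : (0:ℝ) ≤ ((m).factorial : ℝ) * K *
        (K * (∑ a, F a * G a) - (∑ a, F a) * (∑ a, G a)) := by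
      apply mul_nonneg (mul_nonneg hfacpos.le hKR.le)
      linarith
    nlinarith [hint]
  | succ T ih =>
    intro f g hf hg Mf Mg hbf hbg
    have hKR : (0:ℝ) < ((m+2:ℕ):ℝ) := by positivity
    rw [ilhs_step h hf.measurable hg.measurable hbf hbg (T+1) 0 1,
      ilhs_step h hf.measurable hg.measurable hbf hbg T 0 1]
    refine mul_le_mul_of_nonneg_left (Finset.sum_le_sum fun π _ => ?_) (by positivity)
    exact ih (fun x => f ((((π 0 : ℕ):ℝ) + x)/((m+2:ℕ):ℝ)))
      (fun x => g ((((π 1 : ℕ):ℝ) + x)/((m+2:ℕ):ℝ)))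
      (mono_aff hf _ hKR) (mono_aff hg _ hKR) Mf Mg (fun x => hbf _) (fun x => hbg _)


lemma ilhs_ae_mem (h : IsILHS μ U0 σ) (T : ℕ) (j : Fin (m+2)) :
    ∀ᵐ ω ∂μ, ilhs U0 σ T j ω ∈ Set.Ioo (0:ℝ) 1 := by
  have hmap : μ.map (U0 j) (Set.Ioo 0 1) = 1 := by
    rw [h.2.2.1 j]
    simp [Measure.restrict_apply, Real.volume_Ioo]
  rw [Measure.map_apply (h.1 j) measurableSet_Ioo] at hmap
  have hcompl : μ ((U0 j ⁻¹' Set.Ioo 0 1)ᶜ) = 0 := by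
    rw [measure_compl ((h.1 j) measurableSet_Ioo) (measure_ne_top μ _), hmap, measure_univ]
    simp
  have h1 : ∀ᵐ ω ∂μ, U0 j ω ∈ Set.Ioo (0:ℝ) 1 := by
    have hset : {ω | ¬ U0 j ω ∈ Set.Ioo (0:ℝ) 1} = (U0 j ⁻¹' Set.Ioo 0 1)ᶜ := by
      ext ω; simp
    rw [MeasureTheory.ae_iff, hset]
    exact hcompl
  filter_upwards [h1] with ω hω
  exact ilhs_mem_Ioo (by omega) T j ω hω

lemma covar_congr_ae {f g f' g' : Ω → ℝ} (hf : f =ᵐ[μ] f') (hg : g =ᵐ[μ] g') :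
    covar μ f g = covar μ f' g' := by
  unfold covar
  rw [integral_congr_ae hf, integral_congr_ae hg, integral_congr_ae (f := fun ω => f ω * g ω) (g := fun ω => f' ω * g' ω) (hf.mul hg)]

lemma covar_neg (f g : Ω → ℝ) :
    covar μ (fun ω => -(f ω)) (fun ω => -(g ω)) = covar μ f g := by
  unfold covar
  simp only [neg_mul_neg]
  rw [integral_neg, integral_neg]
  ring

lemma ilhs_master (h : IsILHS μ U0 σ) {f : ℝ → ℝ} (hf : Monotone f) {M : ℝ}
    (hb : ∀ x, |f x| ≤ M) (T : ℕ) :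
    covar μ (fun ω => f (ilhs U0 σ (T+1) 0 ω)) (fun ω => f (ilhs U0 σ (T+1) 1 ω)) ≤
      covar μ (fun ω => f (ilhs U0 σ T 0 ω)) (fun ω => f (ilhs U0 σ T 1 ω)) := by
  unfold covar
  rw [(ilhs_mean h (T+1) f hf M hb).1, (ilhs_mean h (T+1) f hf M hb).2,
    (ilhs_mean h T f hf M hb).1, (ilhs_mean h T f hf M hb).2]
  exact sub_le_sub_right (ilhs_claim h T f f hf hf M M hb hb) _

end Main


/-- For a monotone square-integrable function `h` on `[0,1]`,
`Cov(h(U_{T+1}⁽¹⁾), h(U_{T+1}⁽²⁾))` is nonincreasing in `T` along the ILHS iteration. -/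
theorem ilhs_cov_antitone {Ω : Type*} [MeasurableSpace Ω] (μ : Measure Ω)
    [IsProbabilityMeasure μ] {k : ℕ} (hk : 2 ≤ k)
    (U0 : Fin k → Ω → ℝ) (σ : ℕ → Ω → Equiv.Perm (Fin k)) (h : IsILHS μ U0 σ)
    (h₀ : ℝ → ℝ)
    (hmono : MonotoneOn h₀ (Set.Icc (0 : ℝ) 1) ∨ AntitoneOn h₀ (Set.Icc (0 : ℝ) 1))
    (hL2 : IntegrableOn (fun x => h₀ x ^ 2) (Set.Icc (0 : ℝ) 1) volume) :
    ∀ T : ℕ,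
      covar μ (fun ω => h₀ (ilhs U0 σ (T + 1) ⟨0, by omega⟩ ω))
          (fun ω => h₀ (ilhs U0 σ (T + 1) ⟨1, by omega⟩ ω)) ≤
      covar μ (fun ω => h₀ (ilhs U0 σ T ⟨0, by omega⟩ ω))
          (fun ω => h₀ (ilhs U0 σ T ⟨1, by omega⟩ ω)) := by
  obtain ⟨m, rfl⟩ : ∃ m, k = m + 2 := ⟨k - 2, by omega⟩
  intro T
  have e0 : (⟨0, by omega⟩ : Fin (m+2)) = 0 := by ext; simp
  have e1 : (⟨1, by omega⟩ : Fin (m+2)) = 1 := by ext; simp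
  rw [e0, e1]
  set q : ℝ → ℝ := fun x => max 0 (min 1 x) with hq
  have hqmem : ∀ x, q x ∈ Set.Icc (0:ℝ) 1 := fun x =>
    ⟨le_max_left _ _, max_le zero_le_one (min_le_left _ _)⟩
  have hqmono : Monotone q := fun x y hxy =>
    max_le_max le_rfl (min_le_min le_rfl hxy)
  have hqeq : ∀ x ∈ Set.Ioo (0:ℝ) 1, q x = x := fun x hx => by
    show max 0 (min 1 x) = x
    rw [min_eq_right hx.2.le, max_eq_right hx.1.le]
  rcases hmono with hmono | hmono
  · have hf : Monotone fun x => h₀ (q x) := fun x y hxy =>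
      hmono (hqmem x) (hqmem y) (hqmono hxy)
    have hfb : ∀ x, |h₀ (q x)| ≤ max |h₀ 0| |h₀ 1| := fun x =>
      abs_le_max_abs_abs (hmono (Set.left_mem_Icc.2 zero_le_one) (hqmem x) (hqmem x).1)
        (hmono (hqmem x) (Set.right_mem_Icc.2 zero_le_one) (hqmem x).2)
    have hae : ∀ (t : ℕ) (j : Fin (m+2)),
        (fun ω => h₀ (ilhs U0 σ t j ω)) =ᵐ[μ] (fun ω => h₀ (q (ilhs U0 σ t j ω))) := by
      intro t j
      filter_upwards [ilhs_ae_mem h t j] with ω hω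
      rw [hqeq _ hω]
    rw [covar_congr_ae (hae (T+1) 0) (hae (T+1) 1), covar_congr_ae (hae T 0) (hae T 1)]
    exact ilhs_master h hf hfb T
  · have hf : Monotone fun x => -h₀ (q x) := fun x y hxy =>
      neg_le_neg (hmono (hqmem x) (hqmem y) (hqmono hxy))
    have hfb : ∀ x, |(-h₀ (q x) : ℝ)| ≤ max |h₀ 1| |h₀ 0| := fun x => by
      rw [abs_neg]
      exact abs_le_max_abs_abs (hmono (hqmem x) (Set.right_mem_Icc.2 zero_le_one) (hqmem x).2)
        (hmono (Set.left_mem_Icc.2 zero_le_one) (hqmem x) (hqmem x).1)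
    have hae : ∀ (t : ℕ) (j : Fin (m+2)),
        (fun ω => h₀ (ilhs U0 σ t j ω)) =ᵐ[μ] (fun ω => -(-h₀ (q (ilhs U0 σ t j ω)))) := by
      intro t j
      filter_upwards [ilhs_ae_mem h t j] with ω hω
      rw [neg_neg, hqeq _ hω]
    rw [covar_congr_ae (hae (T+1) 0) (hae (T+1) 1), covar_congr_ae (hae T 0) (hae T 1)]
    rw [covar_neg (fun ω => -h₀ (q (ilhs U0 σ (T+1) 0 ω)))
        (fun ω => -h₀ (q (ilhs U0 σ (T+1) 1 ω))),
      covar_neg (fun ω => -h₀ (q (ilhs U0 σ T 0 ω))) (fun ω => -h₀ (q (ilhs U0 σ T 1 ω)))]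
    exact ilhs_master h hf hfb T
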